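/- Let L ≥ 1, let n₀ = n, n₁, …, n_{L−1} be positive layer dimensions and n_L = d the output dimension. Let φ : ℝ → ℝ be convex on all of ℝ and monotone (nondecreasing). For l = 1, …, L let W^l be an n_l × n_{l−1} real matrix all of whose entries are nonnegative, V^l an n_l × n real matrix, and ω^l ∈ ℝ^{n_l}. Define z⁰(x) = x, z^l(x) = φ applied componentwise to (W^l · z^{l−1}(x) + V^l · x + ω^l) for l = 1, …, L−1, and the network output f(x) = W^L · z^{L−1}(x) + V^L · x + ω^L. Then for every output index i ∈ Fin d, the map x ↦ (f x) i is convex on all of ℝ^n. -/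

import Mathlib

open Matrix

private lemma convexOn_finset_sum {E : Type*} [AddCommGroup E] [Module ℝ E]
    {ι : Type*} (s : Finset ι) (g : ι → E → ℝ)
    (hg : ∀ j ∈ s, ConvexOn ℝ Set.univ (g j)) :
    ConvexOn ℝ Set.univ (fun x => ∑ j ∈ s, g j x) := by
  classical
  induction s using Finset.cons_induction with
  | empty => simpa using convexOn_const (0 : ℝ) convex_univ
  | cons a s ha ih =>
    simp only [Finset.sum_cons]
    exact (hg a (Finset.mem_cons_self a s)).add
      (ih fun j hj => hg j (Finset.mem_cons_of_mem hj))

private lemma convexOn_mulVec {m n : ℕ} (M : Matrix (Fin m) (Fin n) ℝ) (i : Fin m) :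
    ConvexOn ℝ Set.univ (fun x : Fin n → ℝ => M.mulVec x i) := by
  refine ⟨convex_univ, fun x _ y _ a b ha hb hab => le_of_eq ?_⟩
  simp [Matrix.mulVec_add, Matrix.mulVec_smul]

private lemma convexOn_layer {n m k : ℕ} (W : Matrix (Fin m) (Fin k) ℝ)
    (hW : ∀ i j, 0 ≤ W i j) (V : Matrix (Fin m) (Fin n) ℝ) (ω : Fin m → ℝ)
    (g : (Fin n → ℝ) → Fin k → ℝ)
    (hg : ∀ j, ConvexOn ℝ Set.univ fun x => g x j) (i : Fin m) :
    ConvexOn ℝ Set.univ (fun x => (W.mulVec (g x) + V.mulVec x + ω) i) := by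
  have h1 : ConvexOn ℝ Set.univ (fun x => ∑ j, W i j * g x j) :=
    convexOn_finset_sum _ _ fun j _ => (hg j).smul (hW i j)
  have h2 : ConvexOn ℝ Set.univ (fun x => V.mulVec x i + ω i) :=
    (convexOn_mulVec V i).add (convexOn_const _ convex_univ)
  have := h1.add h2
  convert this using 2 with x
  case e'_10 => rfl
  simp [Matrix.mulVec, dotProduct]
  ring

theorem icnn_output_convex
    (L : ℕ) (hL : 1 ≤ L)
    (dims : ℕ → ℕ) (hdims : ∀ l, l ≤ L - 1 → 0 < dims l)
    (φ : ℝ → ℝ) (hφ_convex : ConvexOn ℝ Set.univ φ) (hφ_mono : Monotone φ)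
    (W : (l : ℕ) → Matrix (Fin (dims (l + 1))) (Fin (dims l)) ℝ)
    (hW : ∀ l, l + 1 ≤ L → ∀ i j, 0 ≤ W l i j)
    (V : (l : ℕ) → Matrix (Fin (dims (l + 1))) (Fin (dims 0)) ℝ)
    (ω : (l : ℕ) → Fin (dims (l + 1)) → ℝ)
    (z : (l : ℕ) → (Fin (dims 0) → ℝ) → (Fin (dims l) → ℝ))
    (hz0 : ∀ x, z 0 x = x)
    (hzrec : ∀ l, l + 1 ≤ L - 1 → ∀ x,
      z (l + 1) x = fun i => φ (((W l).mulVec (z l x) + (V l).mulVec x + ω l) i))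
    (f : (Fin (dims 0) → ℝ) → (Fin (dims (L - 1 + 1)) → ℝ))
    (hf : ∀ x, f x =
      (W (L - 1)).mulVec (z (L - 1) x) + (V (L - 1)).mulVec x + ω (L - 1)) :
    ∀ i : Fin (dims (L - 1 + 1)), ConvexOn ℝ Set.univ (fun x => f x i) := by
  have key : ∀ l, l ≤ L - 1 → ∀ j, ConvexOn ℝ Set.univ (fun x => z l x j) := by
    intro l
    induction l with
    | zero =>
      intro _ j
      have : (fun x : Fin (dims 0) → ℝ => z 0 x j) = fun x => x j := by
        funext x; rw [hz0]
      rw [this]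
      exact ⟨convex_univ, fun x _ y _ a b ha hb hab => le_of_eq (by simp)⟩
    | succ l ih =>
      intro hl j
      have hl' : l ≤ L - 1 := le_of_lt (Nat.lt_of_succ_le hl)
      have hconv := convexOn_layer (W l)
        (hW l (le_trans hl (Nat.sub_le L 1))) (V l) (ω l) (z l) (ih hl') j
      have heq : (fun x => z (l + 1) x j)
          = fun x => φ (((W l).mulVec (z l x) + (V l).mulVec x + ω l) j) := by
        funext x; rw [hzrec l hl x]
      rw [heq]
      exact ⟨convex_univ, fun x _ y _ a b ha hb hab =>
        (hφ_mono (hconv.2 trivial trivial ha hb hab)).trans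
          (hφ_convex.2 trivial trivial ha hb hab)⟩
  intro i
  have hconv := convexOn_layer (W (L - 1))
    (hW (L - 1) (by omega)) (V (L - 1)) (ω (L - 1)) (z (L - 1))
    (key (L - 1) le_rfl) i
  have : (fun x => f x i)
      = fun x => ((W (L-1)).mulVec (z (L-1) x) + (V (L-1)).mulVec x + ω (L-1)) i := by
    funext x; rw [hf]
  rw [this]; exact hconv
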